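/- arXiv:1806.08054 — 5 statements merged into one kernel-verified Lean document; each statement's English description precedes it below -/
import Mathlib

section
/- Let α, β, γ, B be nonnegative real numbers and set λ = α²γ + (β − α)², assuming λ ≠ 1. Let (H_t)_{t≥0} and (E_t)_{t≥0} be sequences of nonnegative reals with H_0 = 0, H_t ≤ (β − α)²·H_{t−1} + E_{t−1} for all t ≥ 1, and E_t ≤ γB + α²γ·H_t for all t ≥ 0. Then for every t ≥ 0, H_t ≤ γB·(1 − λ^t)/(1 − λ). -/
/-- Bound on the second moment `H t` of the accumulated quantization error:
`H t ≤ γB·(1 − λ^t)/(1 − λ)` with `λ = α²γ + (β − α)²`. -/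
theorem stmt4 (α β γ B : ℝ) (hα : 0 ≤ α) (hβ : 0 ≤ β) (hγ : 0 ≤ γ) (hB : 0 ≤ B)
    (lam : ℝ) (hlam : lam = α ^ 2 * γ + (β - α) ^ 2) (hlam1 : lam ≠ 1)
    (H E : ℕ → ℝ) (hHnn : ∀ t, 0 ≤ H t) (hEnn : ∀ t, 0 ≤ E t)
    (hH0 : H 0 = 0)
    (hHrec : ∀ t : ℕ, 1 ≤ t → H t ≤ (β - α) ^ 2 * H (t - 1) + E (t - 1))
    (hErec : ∀ t : ℕ, E t ≤ γ * B + α ^ 2 * γ * H t) :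
    ∀ t : ℕ, H t ≤ γ * B * (1 - lam ^ t) / (1 - lam) := by
  have hlamnn : 0 ≤ lam := by
    rw [hlam]; positivity
  have hne : 1 - lam ≠ 0 := fun h => hlam1 (by linarith)
  intro t
  induction t with
  | zero => simp [hH0]
  | succ n ih =>
    have hstep : H (n + 1) ≤ lam * H n + γ * B := by
      have h1 := hHrec (n + 1) (Nat.le_add_left 1 n)
      have h2 := hErec n
      simp only [Nat.add_sub_cancel] at h1
      rw [hlam]
      nlinarith [hHnn n]
    have h3 : lam * H n ≤ lam * (γ * B * (1 - lam ^ n) / (1 - lam)) :=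
      mul_le_mul_of_nonneg_left ih hlamnn
    have : lam * (γ * B * (1 - lam ^ n) / (1 - lam)) + γ * B
        = γ * B * (1 - lam ^ (n + 1)) / (1 - lam) := by
      field_simp
      ring
    linarith
end

section
/- Let α, β, γ, B be nonnegative real numbers and set λ = α²γ + (β − α)², assuming λ ≠ 1. Let (H_t)_{t≥0} and (E_t)_{t≥0} be sequences of nonnegative reals with H_0 = 0, H_t ≤ (β − α)²·H_{t−1} + E_{t−1} for all t ≥ 1, and E_t ≤ γB + α²γ·H_t for all t ≥ 0. Then for every t ≥ 0, E_t ≤ (1 + α²γ·(1 − λ^t)/(1 − λ))·γB. -/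
/-- Lemma 2 of the paper (sequence form): the second moment `E t` of the quantization
error satisfies `E t ≤ (1 + α²γ·(1 − λ^t)/(1 − λ))·γB` with `λ = α²γ + (β − α)²`. -/
theorem stmt5 (α β γ B : ℝ) (hα : 0 ≤ α) (hβ : 0 ≤ β) (hγ : 0 ≤ γ) (hB : 0 ≤ B)
    (lam : ℝ) (hlam : lam = α ^ 2 * γ + (β - α) ^ 2) (hlam1 : lam ≠ 1)
    (H E : ℕ → ℝ) (hHnn : ∀ t, 0 ≤ H t) (hEnn : ∀ t, 0 ≤ E t)
    (hH0 : H 0 = 0)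
    (hHrec : ∀ t : ℕ, 1 ≤ t → H t ≤ (β - α) ^ 2 * H (t - 1) + E (t - 1))
    (hErec : ∀ t : ℕ, E t ≤ γ * B + α ^ 2 * γ * H t) :
    ∀ t : ℕ, E t ≤ (1 + α ^ 2 * γ * (1 - lam ^ t) / (1 - lam)) * (γ * B) := by
  have hlamnn : 0 ≤ lam := by
    rw [hlam]; positivity
  have key : ∀ t : ℕ, H t ≤ γ * B * ∑ i ∈ Finset.range t, lam ^ i := by
    intro t
    induction t with
    | zero => simp [hH0]
    | succ n ih =>
      have h1 := hHrec (n + 1) (Nat.le_add_left 1 n)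
      simp only [Nat.add_sub_cancel] at h1
      have h2 := hErec n
      have h3 : H (n + 1) ≤ lam * H n + γ * B := by
        rw [hlam]; nlinarith [hHnn n]
      have h4 : lam * H n ≤ lam * (γ * B * ∑ i ∈ Finset.range n, lam ^ i) :=
        mul_le_mul_of_nonneg_left ih hlamnn
      calc H (n + 1) ≤ lam * (γ * B * ∑ i ∈ Finset.range n, lam ^ i) + γ * B := by
            linarith
        _ = γ * B * ∑ i ∈ Finset.range (n + 1), lam ^ i := by
            rw [Finset.sum_range_succ]
            have hg := geom_sum_mul lam n
            linear_combination γ * B * hg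
  intro t
  have h2 := hErec t
  have h3 : α ^ 2 * γ * H t ≤ α ^ 2 * γ * (γ * B * ∑ i ∈ Finset.range t, lam ^ i) := by
    apply mul_le_mul_of_nonneg_left (key t); positivity
  have h4 : (∑ i ∈ Finset.range t, lam ^ i) = (1 - lam ^ t) / (1 - lam) := by
    rw [geom_sum_eq hlam1]
    rw [div_eq_div_iff (sub_ne_zero.mpr hlam1) (sub_ne_zero.mpr (Ne.symm hlam1))]
    ring
  calc E t ≤ γ * B + α ^ 2 * γ * (γ * B * ∑ i ∈ Finset.range t, lam ^ i) := by linarith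
    _ = (1 + α ^ 2 * γ * (1 - lam ^ t) / (1 - lam)) * (γ * B) := by
        rw [h4]; ring
end

section
/- Let α, β, γ, B be nonnegative real numbers and set λ = α²γ + (β − α)², assuming λ < 1. Let (H_t)_{t≥0} and (E_t)_{t≥0} be sequences of nonnegative reals with H_0 = 0, H_t ≤ (β − α)²·H_{t−1} + E_{t−1} for all t ≥ 1, and E_t ≤ γB + α²γ·H_t for all t ≥ 0. Then for every t ≥ 0, E_t ≤ (1 + α²γ/(1 − λ))·γB; i.e., the bound is uniform in t and hence the variance bound of the quantization error does not diverge during optimization. -/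
/-- Uniform-in-`t` variance bound: if `λ = α²γ + (β − α)² < 1`, then
`E t ≤ (1 + α²γ/(1 − λ))·γB` for every `t`; the bound does not diverge. -/
theorem stmt6 (α β γ B : ℝ) (hα : 0 ≤ α) (hβ : 0 ≤ β) (hγ : 0 ≤ γ) (hB : 0 ≤ B)
    (lam : ℝ) (hlam : lam = α ^ 2 * γ + (β - α) ^ 2) (hlam1 : lam < 1)
    (H E : ℕ → ℝ) (hHnn : ∀ t, 0 ≤ H t) (hEnn : ∀ t, 0 ≤ E t)
    (hH0 : H 0 = 0)
    (hHrec : ∀ t : ℕ, 1 ≤ t → H t ≤ (β - α) ^ 2 * H (t - 1) + E (t - 1))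
    (hErec : ∀ t : ℕ, E t ≤ γ * B + α ^ 2 * γ * H t) :
    ∀ t : ℕ, E t ≤ (1 + α ^ 2 * γ / (1 - lam)) * (γ * B) := by
  have hlamnn : 0 ≤ lam := by
    rw [hlam]; positivity
  have h1 : 0 < 1 - lam := by linarith
  have hγB : 0 ≤ γ * B := mul_nonneg hγ hB
  have hK : ∀ t : ℕ, H t ≤ γ * B / (1 - lam) := by
    intro t
    induction t with
    | zero => rw [hH0]; positivity
    | succ n ih =>
      have h2 := hHrec (n + 1) (by omega)
      simp only [Nat.add_sub_cancel] at h2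
      have h3 := hErec n
      have key : (β - α) ^ 2 * H n + α ^ 2 * γ * H n = lam * H n := by
        rw [hlam]; ring
      have : H (n + 1) ≤ lam * H n + γ * B := by linarith
      have hlamH : lam * H n ≤ lam * (γ * B / (1 - lam)) :=
        mul_le_mul_of_nonneg_left ih hlamnn
      have : H (n + 1) ≤ lam * (γ * B / (1 - lam)) + γ * B := by linarith
      calc H (n + 1) ≤ lam * (γ * B / (1 - lam)) + γ * B := this
        _ = γ * B / (1 - lam) := by field_simp; ring
  intro t
  have h3 := hErec t
  have h4 : α ^ 2 * γ * H t ≤ α ^ 2 * γ * (γ * B / (1 - lam)) :=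
    mul_le_mul_of_nonneg_left (hK t) (by positivity)
  have : (1 + α ^ 2 * γ / (1 - lam)) * (γ * B) =
      γ * B + α ^ 2 * γ * (γ * B / (1 - lam)) := by
    field_simp
  linarith
end

section
/- Let A be a d×d real matrix, b, w*, w^{(0)} ∈ ℝ^d with A·w* + b = 0, and let η, α, β be real numbers. Let (ξ^{(t')})_{t'≥0} and (ε^{(t')})_{t'≥0} be sequences in ℝ^d, define h^{(0)} = 0 and h^{(t')} = (β − α)·h^{(t'−1)} − ε^{(t'−1)} for t' ≥ 1, and define the iterates w^{(t'+1)} = w^{(t')} − η·(A·w^{(t')} + b + ξ^{(t')} + α·h^{(t')} + ε^{(t')}). Set H = I − η·A and, for 0 ≤ t' ≤ t, Θ^{(t')} = H^{t−t'} − α·Σ_{t''=t'+1}^{t} (β − α)^{t''−t'−1}·H^{t−t''}. Then for every t ≥ 0, w^{(t+1)} − w* = H^{t+1}·(w^{(0)} − w*) − η·Σ_{t'=0}^{t} H^{t−t'}·ξ^{(t')} − η·Σ_{t'=0}^{t} Θ^{(t')}·ε^{(t')}. -/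
lemma stmt10_sum_mulVec {d : ℕ} {ι : Type*} (s : Finset ι)
    (M : ι → Matrix (Fin d) (Fin d) ℝ) (v : Fin d → ℝ) :
    (∑ i ∈ s, M i).mulVec v = ∑ i ∈ s, (M i).mulVec v := by
  classical
  induction s using Finset.induction with
  | empty => simp [Matrix.zero_mulVec]
  | insert _ _ hx ih =>
      rw [Finset.sum_insert hx, Finset.sum_insert hx, Matrix.add_mulVec, ih]

lemma stmt10_tri {M : Type*} [AddCommMonoid M] (n : ℕ) (f : ℕ → ℕ → M) :
    ∑ i ∈ Finset.range n, ∑ j ∈ Finset.range i, f i j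
      = ∑ j ∈ Finset.range n, ∑ i ∈ Finset.Ico (j + 1) n, f i j := by
  have h1 : ∀ i ∈ Finset.range n,
      ∑ j ∈ Finset.range i, f i j
        = ∑ j ∈ Finset.range n, if j < i then f i j else 0 := by
    intro i hi
    rw [← Finset.sum_filter]
    congr 1
    ext j
    simp only [Finset.mem_filter, Finset.mem_range] at *
    omega
  rw [Finset.sum_congr rfl h1, Finset.sum_comm]
  refine Finset.sum_congr rfl fun j hj => ?_
  rw [← Finset.sum_filter]
  congr 1
  ext i
  simp only [Finset.mem_filter, Finset.mem_range, Finset.mem_Ico]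
  omega

/-- Deterministic error-decomposition identity of ECQ-SGD for the quadratic objective:
`w^{(t+1)} − w* = H^{t+1}(w^{(0)} − w*) − η ∑ H^{t−t'} ξ^{(t')} − η ∑ Θ^{(t')} ε^{(t')}`. -/
theorem stmt10 (d : ℕ) (A : Matrix (Fin d) (Fin d) ℝ) (b wstar w0 : Fin d → ℝ)
    (hopt : A.mulVec wstar + b = 0) (η α β : ℝ)
    (ξ ε : ℕ → Fin d → ℝ) (h : ℕ → Fin d → ℝ)
    (h0 : h 0 = 0)
    (hrec : ∀ t' : ℕ, 1 ≤ t' → h t' = (β - α) • h (t' - 1) - ε (t' - 1))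
    (w : ℕ → Fin d → ℝ) (hw0 : w 0 = w0)
    (hwrec : ∀ t' : ℕ,
      w (t' + 1) = w t' - η • (A.mulVec (w t') + b + ξ t' + α • h t' + ε t'))
    (H : Matrix (Fin d) (Fin d) ℝ) (hH : H = 1 - η • A)
    (t : ℕ) (Θ : ℕ → Matrix (Fin d) (Fin d) ℝ)
    (hΘ : ∀ t', Θ t' = H ^ (t - t')
        - α • ∑ t'' ∈ Finset.Ico (t' + 1) (t + 1), (β - α) ^ (t'' - t' - 1) • H ^ (t - t'')) :
    w (t + 1) - wstar = (H ^ (t + 1)).mulVec (w0 - wstar)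
      - η • ∑ t' ∈ Finset.range (t + 1), (H ^ (t - t')).mulVec (ξ t')
      - η • ∑ t' ∈ Finset.range (t + 1), (Θ t').mulVec (ε t') := by
  -- closed form for h
  have hclosed : ∀ n, h n = -∑ s ∈ Finset.range n, ((β - α) ^ (n - 1 - s)) • ε s := by
    intro n
    induction n with
    | zero => simp [h0]
    | succ k ih =>
        rw [hrec (k + 1) (by omega)]
        simp only [Nat.add_sub_cancel]
        rw [ih, Finset.sum_range_succ]
        have hterm : ∀ s ∈ Finset.range k,
            ((β - α) ^ (k - s)) • ε s = (β - α) • ((β - α) ^ (k - 1 - s)) • ε s := by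
          intro s hs
          rw [smul_smul, ← pow_succ']
          congr 2
          simp only [Finset.mem_range] at hs
          omega
        rw [Finset.sum_congr rfl hterm]
        simp only [Nat.sub_self, pow_zero, one_smul, smul_neg, Finset.smul_sum]
        abel
  -- error recurrence
  have herr : ∀ n, w (n + 1) - wstar
      = H.mulVec (w n - wstar) - η • (ξ n + α • h n + ε n) := by
    intro n
    have hb : A.mulVec wstar = -b := by
      rw [eq_neg_iff_add_eq_zero]; exact hopt
    have hA : A.mulVec (w n) + b = A.mulVec (w n - wstar) := by
      rw [Matrix.mulVec_sub, hb, sub_neg_eq_add]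
    rw [hwrec n, hA, hH, Matrix.sub_mulVec, Matrix.one_mulVec, Matrix.smul_mulVec]
    have hsplit : η • (A.mulVec (w n - wstar) + ξ n + α • h n + ε n)
        = η • A.mulVec (w n - wstar) + η • (ξ n + α • h n + ε n) := by
      rw [← smul_add]; congr 1; abel
    rw [hsplit]
    abel
  -- main induction
  have main : ∀ n, w (n + 1) - wstar
      = (H ^ (n + 1)).mulVec (w0 - wstar)
        - η • ∑ t' ∈ Finset.range (n + 1),
            (H ^ (n - t')).mulVec (ξ t' + α • h t' + ε t') := by
    intro n
    induction n with
    | zero =>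
        rw [herr 0, hw0]
        simp
    | succ k ih =>
        rw [herr (k + 1), ih, Matrix.mulVec_sub, Matrix.mulVec_smul,
          Matrix.mulVec_mulVec, ← pow_succ']
        have hs : H.mulVec (∑ t' ∈ Finset.range (k + 1),
              (H ^ (k - t')).mulVec (ξ t' + α • h t' + ε t'))
            = ∑ t' ∈ Finset.range (k + 1),
              (H ^ (k + 1 - t')).mulVec (ξ t' + α • h t' + ε t') := by
          have hm := map_sum H.mulVecLin
            (fun t' => (H ^ (k - t')).mulVec (ξ t' + α • h t' + ε t'))
            (Finset.range (k + 1))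
          simp only [Matrix.mulVecLin_apply] at hm
          rw [hm]
          refine Finset.sum_congr rfl fun t' ht' => ?_
          simp only [Finset.mem_range] at ht'
          have he : k + 1 - t' = (k - t') + 1 := by omega
          rw [Matrix.mulVec_mulVec, he, pow_succ']
        rw [hs, Finset.sum_range_succ (n := k + 1), Nat.sub_self, pow_zero,
          Matrix.one_mulVec]
        module
  have hΘterm : ∀ s, (Θ s).mulVec (ε s)
      = (H ^ (t - s)).mulVec (ε s)
        - α • ∑ t'' ∈ Finset.Ico (s + 1) (t + 1),
            ((β - α) ^ (t'' - s - 1)) • (H ^ (t - t'')).mulVec (ε s) := by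
    intro s
    rw [hΘ s, Matrix.sub_mulVec, Matrix.smul_mulVec, stmt10_sum_mulVec]
    congr 2
    refine Finset.sum_congr rfl fun t'' _ => ?_
    rw [Matrix.smul_mulVec]
  have hterm : ∀ t' ∈ Finset.range (t + 1),
      (H ^ (t - t')).mulVec (ξ t' + α • h t' + ε t')
      = (H ^ (t - t')).mulVec (ξ t')
        + ((H ^ (t - t')).mulVec (ε t')
          - α • ∑ s ∈ Finset.range t',
              ((β - α) ^ (t' - 1 - s)) • (H ^ (t - t')).mulVec (ε s)) := by
    intro t' _
    rw [hclosed t']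
    have hm := map_sum (H ^ (t - t')).mulVecLin
      (fun s => ((β - α) ^ (t' - 1 - s)) • ε s) (Finset.range t')
    simp only [Matrix.mulVecLin_apply] at hm
    rw [Matrix.mulVec_add, Matrix.mulVec_add, Matrix.mulVec_smul, Matrix.mulVec_neg, hm]
    simp only [Matrix.mulVec_smul]
    module
  have key : ∑ t' ∈ Finset.range (t + 1),
        (H ^ (t - t')).mulVec (ξ t' + α • h t' + ε t')
      = (∑ t' ∈ Finset.range (t + 1), (H ^ (t - t')).mulVec (ξ t'))
        + ∑ t' ∈ Finset.range (t + 1), (Θ t').mulVec (ε t') := by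
    rw [Finset.sum_congr rfl hterm, Finset.sum_add_distrib]
    congr 1
    rw [Finset.sum_sub_distrib]
    simp only [Finset.smul_sum.symm]
    rw [stmt10_tri (t + 1)
      (fun t' s => ((β - α) ^ (t' - 1 - s)) • (H ^ (t - t')).mulVec (ε s))]
    have hswap : ∀ s ∈ Finset.range (t + 1),
        ∑ i ∈ Finset.Ico (s + 1) (t + 1),
            ((β - α) ^ (i - 1 - s)) • (H ^ (t - i)).mulVec (ε s)
        = ∑ t'' ∈ Finset.Ico (s + 1) (t + 1),
            ((β - α) ^ (t'' - s - 1)) • (H ^ (t - t'')).mulVec (ε s) := by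
      intro s _
      refine Finset.sum_congr rfl fun i _ => ?_
      congr 2
      omega
    rw [Finset.sum_congr rfl hswap]
    rw [Finset.sum_congr rfl fun s _ => hΘterm s, Finset.sum_sub_distrib,
      ← Finset.smul_sum]
  rw [main t, key, smul_add, sub_add_eq_sub_sub]
end

section
/- Let A be a symmetric d×d real matrix and a₁, η, α, β real numbers with η ≥ 0, η·a₁ < 1, α ≥ 0 and β ≥ α, such that A − a₁·I is positive semidefinite and H = I − η·A is positive semidefinite. Set ν = (β − α)/(1 − η·a₁) and, for natural numbers t' < t, Θ^{(t')} = H^{t−t'} − α·Σ_{t''=t'+1}^{t} (β − α)^{t''−t'−1}·H^{t−t''}. Then Θ^{(t')} ⪯ (1 − (α/(1 − η·a₁))·Σ_{k=0}^{t−t'−1} ν^{k})·H^{t−t'} in the Loewner order; when ν ≠ 1 the coefficient equals 1 − (α/(1 − η·a₁))·(1 − ν^{t−t'})/(1 − ν). -/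
private lemma psd_smul {d : ℕ} {M : Matrix (Fin d) (Fin d) ℝ} (hM : M.PosSemidef)
    {c : ℝ} (hc : 0 ≤ c) : (c • M).PosSemidef := by
  refine ⟨by rw [Matrix.IsHermitian, Matrix.conjTranspose_smul, hM.1.eq]; simp, fun x => ?_⟩
  exact (hM.smul hc).2 x

/-- Lemma 3 of the paper: Loewner bound on the quantization-error multiplier
`Θ^{(t')} = H^{t−t'} − α ∑_{t''=t'+1}^{t} (β − α)^{t''−t'−1} H^{t−t''}`:
`Θ^{(t')} ⪯ (1 − (α/(1 − ηa₁))·∑_{k<t−t'} ν^k)·H^{t−t'}` with `ν = (β−α)/(1−ηa₁)`,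
and for `ν ≠ 1` the coefficient equals `1 − (α/(1 − ηa₁))·(1 − ν^{t−t'})/(1 − ν)`. -/
theorem stmt13 (d : ℕ) (A : Matrix (Fin d) (Fin d) ℝ) (hA : A.IsSymm)
    (a₁ η α β : ℝ) (hη : 0 ≤ η) (hηa : η * a₁ < 1) (hα : 0 ≤ α) (hβα : α ≤ β)
    (hA1 : (A - a₁ • 1).PosSemidef)
    (H : Matrix (Fin d) (Fin d) ℝ) (hH : H = 1 - η • A) (hHps : H.PosSemidef)
    (ν : ℝ) (hν : ν = (β - α) / (1 - η * a₁))
    (t' t : ℕ) (htt : t' < t)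
    (Θ : Matrix (Fin d) (Fin d) ℝ)
    (hΘ : Θ = H ^ (t - t')
        - α • ∑ t'' ∈ Finset.Ico (t' + 1) (t + 1), (β - α) ^ (t'' - t' - 1) • H ^ (t - t'')) :
    ((1 - α / (1 - η * a₁) * ∑ k ∈ Finset.range (t - t'), ν ^ k) • H ^ (t - t')
        - Θ).PosSemidef
    ∧ (ν ≠ 1 →
        (1 - α / (1 - η * a₁) * ∑ k ∈ Finset.range (t - t'), ν ^ k)
          = 1 - α / (1 - η * a₁) * ((1 - ν ^ (t - t')) / (1 - ν))) := by
  have hc : (0:ℝ) < 1 - η * a₁ := by linarith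
  set c : ℝ := 1 - η * a₁ with hcdef
  set n : ℕ := t - t' with hndef
  have hHer : H.IsHermitian := hHps.1
  set U : Matrix (Fin d) (Fin d) ℝ := (hHer.eigenvectorUnitary : Matrix (Fin d) (Fin d) ℝ) with hUdef
  set e : Fin d → ℝ := hHer.eigenvalues with hedef
  have hU1 : star U * U = 1 := Unitary.coe_star_mul_self _
  have hU2 : U * star U = 1 := Unitary.coe_mul_star_self _
  set Φ : (Fin d → ℝ) → Matrix (Fin d) (Fin d) ℝ :=
    fun f => U * Matrix.diagonal f * star U with hΦdef
  have hΦH : H = Φ e := by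
    have := hHer.spectral_theorem
    simpa [hΦdef, RCLike.ofReal_real_eq_id] using this
  have hΦpow : ∀ p : ℕ, H ^ p = Φ (fun i => e i ^ p) := by
    intro p
    induction p with
    | zero => simp [hΦdef, hU2]
    | succ p ih =>
      rw [pow_succ, ih, hΦH, hΦdef]
      simp only []
      rw [show U * Matrix.diagonal (fun i => e i ^ p) * star U * (U * Matrix.diagonal e * star U)
          = U * (Matrix.diagonal (fun i => e i ^ p) * (star U * U) * Matrix.diagonal e) * star U by
        noncomm_ring]
      rw [hU1, mul_one, Matrix.diagonal_mul_diagonal]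
      congr 1
  have hΦpsd : ∀ f : Fin d → ℝ, (∀ i, 0 ≤ f i) → (Φ f).PosSemidef := by
    intro f hf
    have := (Matrix.PosSemidef.diagonal (R := ℝ) (n := Fin d) hf).mul_mul_conjTranspose_same U
    simpa [hΦdef, Matrix.star_eq_conjTranspose] using this
  have hΦpsd' : ∀ f : Fin d → ℝ, (Φ f).PosSemidef → ∀ i, 0 ≤ f i := by
    intro f hf
    have h2 := hf.conjTranspose_mul_mul_same U
    rw [hΦdef] at h2
    simp only [← Matrix.star_eq_conjTranspose] at h2
    rw [show star U * (U * Matrix.diagonal f * star U) * U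
        = (star U * U) * Matrix.diagonal f * (star U * U) by noncomm_ring, hU1,
      one_mul, mul_one] at h2
    exact Matrix.posSemidef_diagonal_iff.mp h2
  have hepos : ∀ i, 0 ≤ e i := hHps.eigenvalues_nonneg
  -- upper bound on eigenvalues
  have hcIH : (c • (1 : Matrix (Fin d) (Fin d) ℝ) - H).PosSemidef := by
    have : c • (1 : Matrix (Fin d) (Fin d) ℝ) - H = η • (A - a₁ • 1) := by
      rw [hH, hcdef]
      ext i j
      simp [Matrix.one_apply, Matrix.sub_apply, Matrix.smul_apply, smul_eq_mul]
      ring_nf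
      by_cases h : i = j <;> simp [h] <;> ring
    rw [this]
    exact psd_smul hA1 hη
  have hΦconst : ∀ r : ℝ, Φ (fun _ => r) = r • (1 : Matrix (Fin d) (Fin d) ℝ) := by
    intro r
    rw [hΦdef]
    simp only []
    rw [show (Matrix.diagonal (fun _ : Fin d => r)) = r • (1 : Matrix (Fin d) (Fin d) ℝ) by
      ext i j; by_cases h : i = j <;> simp [h, Matrix.diagonal_apply, Matrix.one_apply]]
    rw [Matrix.mul_smul, Matrix.smul_mul, mul_one, hU2]
  have hΦsub : ∀ f g : Fin d → ℝ, Φ (f - g) = Φ f - Φ g := by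
    intro f g
    simp only [hΦdef]
    rw [show Matrix.diagonal (f - g) = Matrix.diagonal f - Matrix.diagonal g by rw [Matrix.diagonal_sub]; rfl, mul_sub, sub_mul]
  have hebound : ∀ i, e i ≤ c := by
    intro i
    have : (Φ (fun j => c - e j)).PosSemidef := by
      have heq : Φ (fun j => c - e j) = c • (1 : Matrix (Fin d) (Fin d) ℝ) - H := by
        rw [show (fun j => c - e j) = (fun _ => c) - e by funext j; simp, hΦsub, hΦconst, hΦH]
      rw [heq]; exact hcIH
    linarith [hΦpsd' _ this i]
  have hΦsmul : ∀ (r : ℝ) (f : Fin d → ℝ), Φ (fun i => r * f i) = r • Φ f := by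
    intro r f
    simp only [hΦdef]
    rw [show Matrix.diagonal (fun i => r * f i) = r • Matrix.diagonal f by
        rw [← Matrix.diagonal_smul]; rfl,
      Matrix.mul_smul, Matrix.smul_mul]
  have hΦsum : ∀ (S : Finset ℕ) (F : ℕ → (Fin d → ℝ)),
      Φ (fun i => ∑ x ∈ S, F x i) = ∑ x ∈ S, Φ (F x) := by
    intro S F
    simp only [hΦdef]
    rw [show Matrix.diagonal (fun i => ∑ x ∈ S, F x i)
          = ∑ x ∈ S, Matrix.diagonal (F x) by
        ext i j
        by_cases h : i = j
        · subst h; simp [Matrix.sum_apply, Matrix.diagonal_apply]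
        · simp [Matrix.sum_apply, Matrix.diagonal_apply_ne _ h],
      Finset.mul_sum, Finset.sum_mul]
  have hba : (0:ℝ) ≤ β - α := by linarith
  have hn1 : 1 ≤ n := by omega
  set s : ℝ := α / c * ∑ k ∈ Finset.range n, ν ^ k with hsdef
  constructor
  · rw [hΘ]
    set F : ℕ → (Fin d → ℝ) := fun x => fun i => (β - α) ^ (x - t' - 1) * e i ^ (t - x)
      with hFdef
    set g : Fin d → ℝ := fun i =>
      α * (∑ x ∈ Finset.Ico (t' + 1) (t + 1), F x i) - s * e i ^ n with hgdef
    have key : (1 - s) • H ^ n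
        - (H ^ n - α • ∑ t'' ∈ Finset.Ico (t' + 1) (t + 1),
            (β - α) ^ (t'' - t' - 1) • H ^ (t - t'')) = Φ g := by
      have hg : Φ g = α • Φ (fun i => ∑ x ∈ Finset.Ico (t' + 1) (t + 1), F x i)
          - s • Φ (fun i => e i ^ n) := by
        rw [show g = (fun i => α * (∑ x ∈ Finset.Ico (t' + 1) (t + 1), F x i))
              - (fun i => s * e i ^ n) from rfl, hΦsub, hΦsmul, hΦsmul]
      rw [hg, hΦsum, ← hΦpow]
      have hterm : ∀ x ∈ Finset.Ico (t' + 1) (t + 1),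
          Φ (F x) = (β - α) ^ (x - t' - 1) • H ^ (t - x) := by
        intro x _
        rw [hFdef, hΦsmul, ← hΦpow]
      rw [Finset.sum_congr rfl hterm]
      module
    rw [key]
    apply hΦpsd
    intro i
    have h0 : 0 ≤ e i := hepos i
    have hb : e i ≤ c := hebound i
    rw [hgdef]
    simp only [hFdef]
    have hIco : ∑ x ∈ Finset.Ico (t' + 1) (t + 1), (β - α) ^ (x - t' - 1) * e i ^ (t - x)
        = ∑ k ∈ Finset.range n, (β - α) ^ k * e i ^ (n - 1 - k) := by
      rw [Finset.sum_Ico_eq_sum_range]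
      refine Finset.sum_congr (by congr 1; omega) ?_
      intro k hk
      rw [Finset.mem_range] at hk
      congr 2 <;> omega
    rw [hIco, hsdef, Finset.mul_sum,
      show (α / c * ∑ k ∈ Finset.range n, ν ^ k) * e i ^ n
          = ∑ k ∈ Finset.range n, α / c * ν ^ k * e i ^ n by
        rw [Finset.mul_sum, Finset.sum_mul],
      ← Finset.sum_sub_distrib]
    apply Finset.sum_nonneg
    intro k hk
    rw [Finset.mem_range] at hk
    have hsplit : e i ^ n = e i ^ (n - 1 - k) * e i ^ (k + 1) := by
      rw [← pow_add]; congr 1; omega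
    have h2 : e i ^ (k + 1) ≤ c ^ (k + 1) := pow_le_pow_left₀ h0 hb _
    have hterm : α / c * ν ^ k * e i ^ n
        = α * ((β - α) ^ k * e i ^ (n - 1 - k)) * (e i ^ (k + 1) / c ^ (k + 1)) := by
      rw [hν, hsplit, div_pow]
      field_simp
      ring
    have h1 : 0 ≤ α * ((β - α) ^ k * e i ^ (n - 1 - k)) := by positivity
    have h3 : e i ^ (k + 1) / c ^ (k + 1) ≤ 1 := by
      rw [div_le_one (by positivity)]; exact h2
    calc (0:ℝ) ≤ α * ((β - α) ^ k * e i ^ (n - 1 - k))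
            - α * ((β - α) ^ k * e i ^ (n - 1 - k)) * (e i ^ (k + 1) / c ^ (k + 1)) := by
            nlinarith [mul_le_mul_of_nonneg_left h3 h1]
      _ = α * ((β - α) ^ k * e i ^ (n - 1 - k)) - α / c * ν ^ k * e i ^ n := by
            rw [hterm]
  · intro hν1
    have hν1' : ν - 1 ≠ 0 := sub_ne_zero.mpr hν1
    rw [hsdef, geom_sum_eq hν1, show (ν ^ n - 1) / (ν - 1) = (1 - ν ^ n) / (1 - ν) by
      rw [← neg_sub (1:ℝ) (ν ^ n), ← neg_sub (1:ℝ) ν, neg_div_neg_eq]]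
end
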